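/- arXiv:1203.0383 — 2 statements merged into one kernel-verified Lean document; each statement's English description precedes it below -/
import Mathlib

section
/- Let V be a finitely generated free abelian group (e.g. ℤ^m) and B : V → V an injective endomorphism with inverse defined over ℚ. Let Γ = ⋃_{r≥0} B^{-r}(V) inside V ⊗ ℚ. Then for ε ∈ {1,-1}, the natural map V/(1-εB)V → Γ/(1-εB)Γ induced by inclusion is an isomorphism of abelian groups, provided that for every r ≥ 0 there is an integer polynomial p_r with p_r(B)(1-εB) + (εB)^r = 1 on Γ (which holds since 1-(εB)^r is divisible by 1-εB in ℤ[B]). -/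
/-- Let `V = ℤ^m` sit as the lattice `L` inside `ℚ^m`, let `B` be a `ℚ`-linear
automorphism of `ℚ^m` mapping `L` into itself (an injective endomorphism of `L`
with inverse defined over `ℚ`), and let `Γ = ⋃_{r ≥ 0} B^{-r}(L)`.  For
`ε ∈ {1, -1}`, the natural map `L/(1-εB)L → Γ/(1-εB)Γ` induced by the inclusion
is an isomorphism of abelian groups, i.e. every element of `Γ` is congruent
mod `(1-εB)Γ` to an element of `L` (surjectivity) and an element of `L` lying
in `(1-εB)Γ` already lies in `(1-εB)L` (injectivity). -/
theorem stmt_0 (m : ℕ) (B : (Fin m → ℚ) ≃ₗ[ℚ] (Fin m → ℚ))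
    (L : Set (Fin m → ℚ)) (hL : L = {x | ∀ i, ∃ n : ℤ, x i = (n : ℚ)})
    (hB : ∀ v ∈ L, B v ∈ L)
    (ε : ℚ) (hε : ε = 1 ∨ ε = -1)
    (Γ : Set (Fin m → ℚ)) (hΓ : Γ = {x | ∃ r : ℕ, (B ^ r) x ∈ L})
    (N : Set (Fin m → ℚ)) (hN : N = (fun x => x - ε • B x) '' Γ) :
    (∀ x ∈ Γ, ∃ w ∈ L, x - w ∈ N) ∧
      (∀ v ∈ L, v ∈ N → ∃ w ∈ L, v = w - ε • B w) := by
  -- basic L facts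
  have hL0 : (0 : Fin m → ℚ) ∈ L := by
    rw [hL]; intro i; exact ⟨0, by simp⟩
  have hLadd : ∀ x y, x ∈ L → y ∈ L → x + y ∈ L := by
    rw [hL]; intro x y hx hy i
    obtain ⟨a, ha⟩ := hx i; obtain ⟨b, hb⟩ := hy i
    exact ⟨a + b, by simp [ha, hb]⟩
  have hLneg : ∀ x, x ∈ L → -x ∈ L := by
    rw [hL]; intro x hx i
    obtain ⟨a, ha⟩ := hx i
    exact ⟨-a, by simp [ha]⟩
  have hεk : ∀ k : ℕ, ε ^ k = 1 ∨ ε ^ k = -1 := by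
    intro k
    rcases hε with h | h
    · left; rw [h, one_pow]
    · rcases Nat.even_or_odd k with he | ho
      · left; rw [h]; exact he.neg_one_pow
      · right; rw [h]; exact ho.neg_one_pow
  have hεsmul : ∀ (k : ℕ) (x), x ∈ L → ε ^ k • x ∈ L := by
    intro k x hx
    rcases hεk k with h | h <;> rw [h]
    · simpa using hx
    · rw [neg_one_smul]; exact hLneg x hx
  have hε1 : ∀ x, x ∈ L → ε • x ∈ L := by
    intro x hx; simpa using hεsmul 1 x hx
  have hpow : ∀ (r : ℕ) (x), (B ^ (r + 1)) x = (B ^ r) (B x) := by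
    intro r x; rw [pow_succ]; rfl
  have hpow' : ∀ (r : ℕ) (x), (B ^ (r + 1)) x = B ((B ^ r) x) := by
    intro r x; rw [pow_succ']; rfl
  have hBpowL : ∀ (k : ℕ) (v), v ∈ L → (B ^ k) v ∈ L := by
    intro k
    induction k with
    | zero => intro v hv; simpa using hv
    | succ k ih => intro v hv; rw [hpow']; exact hB _ (ih v hv)
  have hpowadd : ∀ (r s : ℕ) (x), (B ^ (r + s)) x = (B ^ s) ((B ^ r) x) := by
    intro r s
    induction s with
    | zero => intro x; simp
    | succ s ih =>
      intro x
      have h : r + (s + 1) = (r + s) + 1 := rfl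
      rw [h, hpow', ih, ← hpow']
  -- Γ facts
  have hΓ0 : (0 : Fin m → ℚ) ∈ Γ := by
    rw [hΓ]; exact ⟨0, by simpa using hL0⟩
  have hΓmem : ∀ x, x ∈ Γ ↔ ∃ r : ℕ, (B ^ r) x ∈ L := by
    intro x; rw [hΓ]; rfl
  have hΓadd : ∀ x y, x ∈ Γ → y ∈ Γ → x + y ∈ Γ := by
    intro x y hx hy
    rw [hΓmem] at hx hy ⊢
    obtain ⟨r, hr⟩ := hx; obtain ⟨s, hs⟩ := hy
    refine ⟨r + s, ?_⟩
    rw [map_add]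
    apply hLadd
    · rw [hpowadd]; exact hBpowL s _ hr
    · rw [show r + s = s + r from add_comm r s, hpowadd]; exact hBpowL r _ hs
  -- key lemma for surjectivity
  have key1 : ∀ (r : ℕ) (x), (B ^ r) x ∈ L →
      ∃ y ∈ Γ, x - ε ^ r • (B ^ r) x = y - ε • B y := by
    intro r
    induction r with
    | zero =>
      intro x hx
      exact ⟨0, hΓ0, by simp⟩
    | succ r ih =>
      intro x hx
      have h1 : (B ^ r) (ε • B x) ∈ L := by
        rw [map_smul, ← hpow]
        exact hε1 _ hx
      obtain ⟨y, hy, hey⟩ := ih (ε • B x) h1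
      have hxΓ : x ∈ Γ := (hΓmem x).2 ⟨r + 1, hx⟩
      refine ⟨x + y, hΓadd x y hxΓ hy, ?_⟩
      have h2 : y - ε • B y = ε • B x - ε ^ (r + 1) • (B ^ (r + 1)) x := by
        rw [← hey, map_smul, ← hpow, smul_smul, ← pow_succ]
      rw [map_add, smul_add]
      linear_combination (norm := module) -h2
  -- key lemma for injectivity
  have key2 : ∀ (r : ℕ) (x), (B ^ r) x ∈ L → x - ε • B x ∈ L → x ∈ L := by
    intro r
    induction r with
    | zero => intro x hx _; simpa using hx
    | succ r ih =>
      intro x hx hsub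
      have h1 : (B ^ r) (ε • B x) ∈ L := by
        rw [map_smul, ← hpow]
        exact hε1 _ hx
      have h2 : (ε • B x) - ε • B (ε • B x) ∈ L := by
        have : (ε • B x) - ε • B (ε • B x) = ε • B (x - ε • B x) := by
          rw [map_sub, map_smul, smul_sub, smul_smul]
        rw [this]
        exact hε1 _ (hB _ hsub)
      have h3 : ε • B x ∈ L := ih (ε • B x) h1 h2
      have : x = (x - ε • B x) + ε • B x := by module
      rw [this]
      exact hLadd _ _ hsub h3
  constructor
  · intro x hx
    rw [hΓmem] at hx
    obtain ⟨r, hr⟩ := hx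
    obtain ⟨y, hy, hey⟩ := key1 r x hr
    refine ⟨ε ^ r • (B ^ r) x, hεsmul r _ hr, ?_⟩
    rw [hN]
    exact ⟨y, hy, hey.symm⟩
  · intro v hv hvN
    rw [hN] at hvN
    obtain ⟨x, hxΓ, hxv⟩ := hvN
    rw [hΓmem] at hxΓ
    obtain ⟨r, hr⟩ := hxΓ
    have hxv' : x - ε • B x = v := hxv
    have hsub : x - ε • B x ∈ L := by rw [hxv']; exact hv
    exact ⟨x, key2 r x hr hsub, hxv'.symm⟩
end

section
/- Let A ∈ M_d(ℤ) be an integer dilation matrix and Γ_n, A_n = Λⁿ(A) as above. If v ∈ Λⁿ(ℤ^d) lies in (1 - A_n)Γ_n, then v ∈ (1 - A_n)Λⁿ(ℤ^d). Concretely: if v = (1 - A_n)A_n^{-r}w for some w ∈ Λⁿ(ℤ^d) and r ≥ 0, then A_n^{-r}w ∈ Λⁿ(ℤ^d). -/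
/-- `subdet A m K L` is the determinant of the `m × m` submatrix of `A` with rows
from `K` and columns from `L` (each listed in increasing order), when
`|K| = |L| = m`, and `0` otherwise. -/
noncomputable def subdet {R : Type*} [CommRing R] {d : ℕ}
    (A : Matrix (Fin d) (Fin d) R) (m : ℕ) (K L : Finset (Fin d)) : R :=
  if h : K.card = m ∧ L.card = m then
    (A.submatrix (fun i : Fin m => ((K.orderIsoOfFin h.1) i : Fin d))
      (fun j : Fin m => ((L.orderIsoOfFin h.2) j : Fin d))).det
  else 0

/-- The matrix of the induced map `Λⁿ(A)` on the `n`-th exterior power in the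
standard basis `{e_I : |I| = n}`: its `(J, K)` entry is `det(A_{J,K})`. -/
noncomputable def extPow {R : Type*} [CommRing R] {d : ℕ}
    (A : Matrix (Fin d) (Fin d) R) (n : ℕ) :
    Matrix {s : Finset (Fin d) // s.card = n} {s : Finset (Fin d) // s.card = n} R :=
  fun K L => subdet A n K.1 L.1

/-- Let `A ∈ M_d(ℤ)` be an integer dilation matrix, `A_n = Λⁿ(A)` (with
inverse `Binv` over `ℚ`), and `Lat = Λⁿ(ℤ^d)`.  If `v ∈ Lat` can be written as
`v = (1 - A_n)(A_n^{-r} w)` with `w ∈ Lat` and `r ≥ 0`, then `A_n^{-r} w ∈ Lat`;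
hence `v` lies in `(1 - A_n) Lat`. -/
theorem stmt_17 (d n : ℕ) (hn : 1 ≤ n) (hnd : n ≤ d)
    (A : Matrix (Fin d) (Fin d) ℤ)
    (hdil : ∀ μ ∈ spectrum ℂ (A.map (Int.cast : ℤ → ℂ)), 1 < ‖μ‖)
    (An Binv : Matrix {s : Finset (Fin d) // s.card = n}
      {s : Finset (Fin d) // s.card = n} ℚ)
    (hAn : An = extPow (A.map (Int.cast : ℤ → ℚ)) n)
    (hBinv : An * Binv = 1 ∧ Binv * An = 1)
    (Lat : Set ({s : Finset (Fin d) // s.card = n} → ℚ))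
    (hLat : Lat = {x | ∀ K, ∃ m : ℤ, x K = (m : ℚ)})
    (v w : {s : Finset (Fin d) // s.card = n} → ℚ) (r : ℕ)
    (hv : v ∈ Lat) (hw : w ∈ Lat)
    (heq : v = (Binv ^ r).mulVec w - An.mulVec ((Binv ^ r).mulVec w)) :
    (Binv ^ r).mulVec w ∈ Lat := by
  set u := (Binv ^ r).mulVec w with hu
  have hcast : An = (Int.castRingHom ℚ).mapMatrix (extPow A n) := by
    rw [hAn]
    ext K L
    simp only [RingHom.mapMatrix_apply, Matrix.map_apply, extPow, subdet]
    split_ifs with h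
    · rw [RingHom.map_det]; rfl
    · simp
  have hpow : ∀ s : ℕ, An ^ s * Binv ^ s = 1 := by
    intro s
    induction s with
    | zero => simp
    | succ k ih =>
      rw [pow_succ, pow_succ', mul_assoc, ← mul_assoc An, hBinv.1, one_mul, ih]
  set P := ∑ i ∈ Finset.range r, An ^ i with hP
  have hgeom : P * (1 - An) = 1 - An ^ r := by
    have h := geom_sum_mul An r
    have h2 : P * (1 - An) = -(P * (An - 1)) := by noncomm_ring
    rw [h2, h, neg_sub]
  have hv1 : v = (1 - An).mulVec u := by
    rw [heq, Matrix.sub_mulVec, Matrix.one_mulVec]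
  have hAu : (An ^ r).mulVec u = w := by
    rw [hu, Matrix.mulVec_mulVec, hpow r, Matrix.one_mulVec]
  have hueq : u = P.mulVec v + w := by
    rw [hv1, Matrix.mulVec_mulVec, hgeom, Matrix.sub_mulVec, Matrix.one_mulVec, hAu]
    abel
  have hPInt : ∀ K L, ∃ m : ℤ, P K L = (m : ℚ) := by
    intro K L
    refine ⟨(∑ i ∈ Finset.range r, (extPow A n) ^ i) K L, ?_⟩
    have hPm : P = (Int.castRingHom ℚ).mapMatrix (∑ i ∈ Finset.range r, (extPow A n) ^ i) := by
      rw [map_sum]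
      exact Finset.sum_congr rfl fun i _ => by rw [map_pow, ← hcast]
    rw [hPm]
    rfl
  rw [hLat] at hv hw ⊢
  intro K
  choose f hf using hPInt
  choose g hg using hv
  choose h hh using hw
  refine ⟨∑ L, f K L * g L + h K, ?_⟩
  rw [hueq]
  push_cast
  simp only [Pi.add_apply, Matrix.mulVec, dotProduct, hf, hg, hh]
end
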